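/- For every integer $n \ge 1$, we have $\mathrm{lcm}_{\lceil n/2 \rceil \le i \le n}\{i\} \ge 2^{n-1}$. -/

import Mathlib

open Finset Nat

-- key: v_p(k * C(n,k)) ≤ log p n
lemma key_fact {p k n : ℕ} (hp : p.Prime) (hk : k ≠ 0) (hkn : k ≤ n) :
    (k * n.choose k).factorization p ≤ Nat.log p n := by
  set b := Nat.log p n + 1 with hb
  have hn0 : n ≠ 0 := by omega
  have hS : emultiplicity p (n.choose k) =
      #{i ∈ Ico 1 b | p ^ i ≤ k % p ^ i + (n - k) % p ^ i} :=
    hp.emultiplicity_choose hkn (Nat.lt_succ_self _)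
  have hK : emultiplicity p k = #{i ∈ Ico 1 b | p ^ i ∣ k} :=
    Nat.emultiplicity_eq_card_pow_dvd hp.ne_one (Nat.pos_of_ne_zero hk)
      (Nat.lt_succ_of_le (Nat.log_mono_right hkn))
  have hdisj : Disjoint {i ∈ Ico 1 b | p ^ i ≤ k % p ^ i + (n - k) % p ^ i}
      {i ∈ Ico 1 b | p ^ i ∣ k} := by
    simp +contextual [Finset.disjoint_right, Nat.dvd_iff_mod_eq_zero,
      Nat.mod_lt _ (pow_pos hp.pos _)]
  have hcard : #{i ∈ Ico 1 b | p ^ i ≤ k % p ^ i + (n - k) % p ^ i} +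
      #{i ∈ Ico 1 b | p ^ i ∣ k} ≤ Nat.log p n := by
    rw [← Finset.card_union_of_disjoint hdisj, Finset.filter_union_right]
    have := (Ico 1 b).card_filter_le
      fun x => p ^ x ≤ k % p ^ x + (n - k) % p ^ x ∨ p ^ x ∣ k
    rwa [Nat.card_Ico 1 b, hb, Nat.add_sub_cancel] at this
  have hchoose0 : n.choose k ≠ 0 := (Nat.choose_pos hkn).ne'
  have hfin1 := Nat.finiteMultiplicity_iff.2 ⟨hp.ne_one, Nat.pos_of_ne_zero hchoose0⟩
  have hfin2 := Nat.finiteMultiplicity_iff.2 ⟨hp.ne_one, Nat.pos_of_ne_zero hk⟩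
  have e1 : (n.choose k).factorization p =
      #{i ∈ Ico 1 b | p ^ i ≤ k % p ^ i + (n - k) % p ^ i} := by
    have := hfin1.emultiplicity_eq_multiplicity
    rw [this] at hS
    rw [← Nat.multiplicity_eq_factorization hp hchoose0]
    exact_mod_cast hS
  have e2 : k.factorization p = #{i ∈ Ico 1 b | p ^ i ∣ k} := by
    have := hfin2.emultiplicity_eq_multiplicity
    rw [this] at hK
    rw [← Nat.multiplicity_eq_factorization hp hk]
    exact_mod_cast hK
  rw [Nat.factorization_mul hk hchoose0]
  simp only [Finsupp.coe_add, Pi.add_apply, e1, e2]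
  omega

lemma dvd_lcm_Icc {k n : ℕ} (hk : k ≠ 0) (hkn : k ≤ n) :
    k * n.choose k ∣ (Finset.Icc 1 n).lcm id := by
  have hn : 1 ≤ n := le_trans (Nat.one_le_iff_ne_zero.2 hk) hkn
  have hL0 : (Finset.Icc 1 n).lcm id ≠ 0 := by
    intro h
    rw [Finset.lcm_eq_zero_iff] at h
    simp only [Set.mem_image, Finset.mem_coe, Finset.mem_Icc, id] at h
    omega
  have hm0 : k * n.choose k ≠ 0 := Nat.mul_ne_zero hk (Nat.choose_pos hkn).ne'
  rw [← Nat.factorization_le_iff_dvd hm0 hL0]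
  intro p
  by_cases hp : p.Prime
  · refine le_trans (key_fact hp hk hkn) ?_
    rcases Nat.eq_zero_or_pos (Nat.log p n) with h | h
    · simp [h]
    · rw [← hp.pow_dvd_iff_le_factorization hL0]
      refine Finset.dvd_lcm (Finset.mem_Icc.2 ⟨Nat.one_le_pow _ _ hp.pos, ?_⟩)
      exact Nat.pow_log_le_self p (by omega)
  · simp [Nat.factorization_eq_zero_of_not_prime _ hp]

lemma lcm_Icc_dvd {n : ℕ} : (Finset.Icc 1 n).lcm id ∣ (Finset.Icc ((n + 1) / 2) n).lcm id := by
  refine Finset.lcm_dvd ?_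
  intro i hi
  rw [Finset.mem_Icc] at hi
  obtain ⟨h1, h2⟩ := hi
  refine dvd_trans (b := (n / i) * i) (show (id i : ℕ) ∣ n / i * i from dvd_mul_left i (n / i)) ?_
  refine Finset.dvd_lcm (Finset.mem_Icc.2 ⟨?_, Nat.div_mul_le_self n i⟩)
  have hmod := Nat.div_add_mod n i
  have hlt : n % i < i := Nat.mod_lt _ (by omega)
  have h3 : 1 ≤ n / i := Nat.one_le_div_iff (by omega) |>.2 h2
  -- n < (n/i + 1) * i ≤ 2 * (n/i) * i, so (n+1)/2 ≤ (n/i)*i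
  have : n + 1 ≤ 2 * ((n / i) * i) := by nlinarith [hmod, hlt, h3]
  omega

lemma arith_bound {n : ℕ} (hn : 1 ≤ n) :
    2 ^ (n - 1) ≤ ((n + 1) / 2) * n.choose ((n + 1) / 2) := by
  rcases Nat.even_or_odd n with ⟨m, hm⟩ | ⟨m, hm⟩
  · -- n = 2m (even), m ≥ 1; write m = m' + 1
    obtain ⟨m', rfl⟩ : ∃ m', m = m' + 1 := ⟨m - 1, by omega⟩
    have hne : n = 2 * m' + 2 := by omega
    subst hne
    have hk : (2 * m' + 2 + 1) / 2 = m' + 1 := by omega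
    rw [hk]
    set C := (2 * m' + 2).choose (m' + 1) with hC
    have hmid : (2 * m' + 2) / 2 = m' + 1 := by omega
    have hsum : (∑ j ∈ range (2 * m' + 3), (2 * m' + 2).choose j) = 2 ^ (2 * m' + 2) :=
      Nat.sum_range_choose (2 * m' + 2)
    have hsplit : (∑ j ∈ range (2 * m' + 3), (2 * m' + 2).choose j) =
        (2 * m' + 2).choose 0 + ((∑ j ∈ range (2 * m' + 1), (2 * m' + 2).choose (j + 1))
          + (2 * m' + 2).choose (2 * m' + 2)) := by
      rw [show 2 * m' + 3 = (2 * m' + 2) + 1 from rfl, Finset.sum_range_succ,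
        show 2 * m' + 2 = (2 * m' + 1) + 1 from rfl, Finset.sum_range_succ']
      ring
    have hbound : ∑ j ∈ range (2 * m' + 1), (2 * m' + 2).choose (j + 1) ≤
        (2 * m' + 1) * C := by
      calc ∑ j ∈ range (2 * m' + 1), (2 * m' + 2).choose (j + 1)
          ≤ ∑ _j ∈ range (2 * m' + 1), C := by
            refine Finset.sum_le_sum fun j _ => ?_
            have := Nat.choose_le_middle (j + 1) (2 * m' + 2)
            rwa [hmid] at this
        _ = (2 * m' + 1) * C := by
            rw [Finset.sum_const, Finset.card_range, smul_eq_mul]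
    have hC2 : 2 ≤ C := by
      have := Nat.choose_le_middle 1 (2 * m' + 2)
      rw [hmid, Nat.choose_one_right] at this
      omega
    have h2n : 2 ^ (2 * m' + 2) ≤ 2 * ((m' + 1) * C) := by
      rw [← hsum, hsplit]
      simp only [Nat.choose_zero_right, Nat.choose_self]
      nlinarith [hbound, hC2]
    have hps : 2 * 2 ^ (2 * m' + 2 - 1) = 2 ^ (2 * m' + 2) := by
      rw [show 2 * m' + 2 - 1 = 2 * m' + 1 by omega]
      ring
    omega
  · -- n = 2m+1, k = m+1
    subst hm
    have hk : (2 * m + 1 + 1) / 2 = m + 1 := by omega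
    rw [hk]
    set C := (2 * m + 1).choose (m + 1) with hC
    have hmid : (2 * m + 1) / 2 = m := by omega
    have hsymm : (2 * m + 1).choose m = C := by
      have h := Nat.choose_symm (show m + 1 ≤ 2 * m + 1 by omega)
      rw [show 2 * m + 1 - (m + 1) = m by omega] at h
      rw [hC]
      exact h
    have hsum : (∑ j ∈ range (2 * m + 2), (2 * m + 1).choose j) = 2 ^ (2 * m + 1) :=
      Nat.sum_range_choose (2 * m + 1)
    have hbound : 2 ^ (2 * m + 1) ≤ 2 * ((m + 1) * C) := by
      rw [← hsum]
      calc ∑ j ∈ range (2 * m + 2), (2 * m + 1).choose j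
          ≤ ∑ _j ∈ range (2 * m + 2), C := by
            refine Finset.sum_le_sum fun j _ => ?_
            have := Nat.choose_le_middle j (2 * m + 1)
            rw [hmid, hsymm] at this
            exact this
        _ = 2 * ((m + 1) * C) := by
            rw [Finset.sum_const, Finset.card_range, smul_eq_mul]
            ring
    have hps : 2 * 2 ^ (2 * m + 1 - 1) = 2 ^ (2 * m + 1) := by
      rw [show 2 * m + 1 - 1 = 2 * m by omega]
      ring
    omega

theorem lcm_Icc_half_ge_two_pow_pred (n : ℕ) (hn : 1 ≤ n) :
    2 ^ (n - 1) ≤ (Finset.Icc ((n + 1) / 2) n).lcm id := by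
  set k := (n + 1) / 2 with hkdef
  have hk0 : k ≠ 0 := by omega
  have hkn : k ≤ n := by omega
  have hdvd : k * n.choose k ∣ (Finset.Icc ((n + 1) / 2) n).lcm id :=
    (dvd_lcm_Icc hk0 hkn).trans lcm_Icc_dvd
  have hpos : 0 < (Finset.Icc ((n + 1) / 2) n).lcm id := by
    rw [Nat.pos_iff_ne_zero]
    intro h
    rw [Finset.lcm_eq_zero_iff] at h
    simp only [Set.mem_image, Finset.mem_coe, Finset.mem_Icc, id] at h
    omega
  calc 2 ^ (n - 1) ≤ k * n.choose k := arith_bound hn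
    _ ≤ _ := Nat.le_of_dvd hpos hdvd
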